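/- Let X and Y be finite types and let f be an X-Y embedding. Then f is faithful if and only if for all constraints KB, θ ⊆ Δ_X: KB ⊆ θ holds iff f*(KB) ⊆ f*(θ). -/

import Mathlib

/-- A probability measure (probability mass function) on a finite type. -/
structure PM (X : Type) [Fintype X] where
  pm : X → ℝ
  nonneg : ∀ x, 0 ≤ pm x
  total : ∑ x, pm x = 1

namespace PM

variable {X Y : Type} [Fintype X] [Fintype Y]

/-- The probability of a set `S`: `μ(S) = ∑_{x ∈ S} μ(x)`. -/
noncomputable def prob (μ : PM X) (S : Set X) : ℝ := ∑ x, S.indicator μ.pm x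

lemma prob_nonneg (μ : PM X) (S : Set X) : 0 ≤ μ.prob S :=
  Finset.sum_nonneg fun x _ => Set.indicator_apply_nonneg fun _ => μ.nonneg x

/-- Marginal on the first component: `μ_X(A) = μ(A × Y)`. -/
noncomputable def margFst (μ : PM (X × Y)) : PM X where
  pm x := ∑ y, μ.pm (x, y)
  nonneg x := Finset.sum_nonneg fun y _ => μ.nonneg (x, y)
  total := by rw [← μ.total, ← Fintype.sum_prod_type]

/-- Marginal on the second component: `μ_Y(B) = μ(X × B)`. -/
noncomputable def margSnd (μ : PM (X × Y)) : PM Y where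
  pm y := ∑ x, μ.pm (x, y)
  nonneg y := Finset.sum_nonneg fun x _ => μ.nonneg (x, y)
  total := by rw [← μ.total, ← Fintype.sum_prod_type_right]

/-- Conditioning `μ|S`; the junk value `μ` is returned when `μ(S) = 0`. -/
noncomputable def cond (μ : PM X) (S : Set X) : PM X :=
  if h : 0 < μ.prob S then
    { pm := fun x => S.indicator μ.pm x / μ.prob S
      nonneg := fun x =>
        div_nonneg (Set.indicator_apply_nonneg fun _ => μ.nonneg x) (le_of_lt h)
      total := by
        rw [← Finset.sum_div]
        exact div_self (ne_of_gt h) }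
  else μ

end PM

open PM

/-- An `X`-inference procedure: a partial map on sets of probability measures. -/
structure InfProc (X : Type) [Fintype X] where
  dom : Set (Set (PM X))
  map : Set (PM X) → Set (PM X)
  map_subset : ∀ A ∈ dom, map A ⊆ A
  map_empty_iff : ∀ A ∈ dom, (map A = ∅ ↔ A = ∅)

/-- `KB ⊢_I θ`. -/
def Infers {X : Type} [Fintype X] (I : InfProc X) (KB θ : Set (PM X)) : Prop :=
  I.map KB ⊆ θ

section Lift

variable {X Y : Type} [Fintype X] [Fintype Y]

/-- A constraint on `Δ_X` viewed as a constraint on `Δ_{X×Y}`: `KB↑`. -/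
def liftKB (Y : Type) [Fintype Y] (KB : Set (PM X)) : Set (PM (X × Y)) :=
  {μ | margFst μ ∈ KB}

/-- `proj_X(B) = {μ_X : μ ∈ B}`. -/
def projFst (B : Set (PM (X × Y))) : Set (PM X) := margFst '' B

/-- `ψ ⊆ Δ_{X×Y}` is `X`-conservative over `KB ⊆ Δ_X`. -/
def Conservative (KB : Set (PM X)) (ψ : Set (PM (X × Y))) : Prop :=
  projFst (liftKB Y KB ∩ ψ) = KB

end Lift

/-- Robustness of a finitary inference procedure. -/
def Robust (I : ∀ (X : Type) [Fintype X], InfProc X) : Prop :=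
  ∀ (X Y : Type) [Fintype X] [Fintype Y], ∀ KB φ : Set (PM X),
    KB ∈ (I X).dom → ∀ ψ : Set (PM (X × Y)), Conservative KB ψ →
      (Infers (I X) KB φ ↔ Infers (I (X × Y)) (liftKB Y KB ∩ ψ) (liftKB Y φ))

/-- An inference procedure is essentially entailment. -/
def EssEntail {X : Type} [Fintype X] (I : InfProc X) : Prop :=
  ∀ KB ∈ I.dom, ∀ (S : Set X) (α β : ℝ),
    Infers I KB {μ | α < μ.prob S ∧ μ.prob S < β} →
    KB ⊆ {μ | α ≤ μ.prob S ∧ μ.prob S ≤ β}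

def DI1 (I : ∀ (X : Type) [Fintype X], InfProc X) : Prop :=
  ∀ (X : Type) [Fintype X], ∀ (S : Set X) (α β : ℝ), α ≤ β →
    {μ : PM X | α ≤ μ.prob S ∧ μ.prob S ≤ β} ∈ (I X).dom

def DI2 (I : ∀ (X : Type) [Fintype X], InfProc X) : Prop :=
  ∀ (X Y : Type) [Fintype X] [Fintype Y], ∀ KB : Set (PM X),
    KB ∈ (I X).dom → liftKB Y KB ∈ (I (X × Y)).dom

def DI3 (I : ∀ (X : Type) [Fintype X], InfProc X) : Prop :=
  ∀ (X : Type) [Fintype X], ∀ KB₁ KB₂ : Set (PM X),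
    KB₁ ∈ (I X).dom → KB₂ ∈ (I X).dom → KB₁ ∩ KB₂ ∈ (I X).dom

/-- An `X`-`Y` embedding: a homomorphism of set algebras. -/
structure Emb (X Y : Type) where
  f : Set X → Set Y
  map_union : ∀ S T, f (S ∪ T) = f S ∪ f T
  map_compl : ∀ S, f Sᶜ = (f S)ᶜ

/-- A faithful embedding. -/
def Emb.Faithful {X Y : Type} (e : Emb X Y) : Prop :=
  ∀ S T : Set X, S ⊆ T ↔ e.f S ⊆ e.f T

section Embeddings

variable {X Y : Type} [Fintype X] [Fintype Y]

/-- `μ` and `ν` correspond under `f`. -/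
def Corr (e : Emb X Y) (μ : PM X) (ν : PM Y) : Prop :=
  ∀ S : Set X, μ.prob S = ν.prob (e.f S)

/-- `f*(D)`, the union over `μ ∈ D` of the measures corresponding to `μ`. -/
def fstar (e : Emb X Y) (D : Set (PM X)) : Set (PM Y) :=
  {ν | ∃ μ ∈ D, Corr e μ ν}

/-- Sets of measures `D_X` and `D_Y` correspond under `f`. -/
def SetCorr (e : Emb X Y) (DX : Set (PM X)) (DY : Set (PM Y)) : Prop :=
  (∀ ν ∈ DY, ∃ μ ∈ DX, Corr e μ ν) ∧ (∀ μ ∈ DX, ∃ ν ∈ DY, Corr e μ ν)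

end Embeddings

/-- Representation independence of a finitary inference procedure. -/
def RepInd (I : ∀ (X : Type) [Fintype X], InfProc X) : Prop :=
  ∀ (X Y : Type) [Fintype X] [Fintype Y] (e : Emb X Y), e.Faithful →
    (∀ KB : Set (PM X), KB ∈ (I X).dom ↔ fstar e KB ∈ (I Y).dom) ∧
    (∀ KB : Set (PM X), KB ∈ (I X).dom → ∀ θ : Set (PM X),
      (Infers (I X) KB θ ↔ Infers (I Y) (fstar e KB) (fstar e θ)))

def DI4 (I : ∀ (X : Type) [Fintype X], InfProc X) : Prop :=
  ∀ (X Y : Type) [Fintype X] [Fintype Y] (e : Emb X Y), e.Faithful →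
    ∀ KB : Set (PM X), (KB ∈ (I X).dom ↔ fstar e KB ∈ (I Y).dom)

/-- `A ⇔ B` for sets of measures. -/
def iffSet {α : Type*} (A B : Set α) : Set α := (A ∩ B) ∪ (Aᶜ ∩ Bᶜ)

def DI5 (I : ∀ (X : Type) [Fintype X], InfProc X) : Prop :=
  ∀ (X Y : Type) [Fintype X] [Fintype Y] (KB : Set (PM (X × Y))) (e : Emb X Y),
    e.Faithful → KB ∈ (I (X × Y)).dom → ∀ φ₁ : Set (PM X),
      KB ∩ iffSet (liftKB Y φ₁) {μ | margSnd μ ∈ fstar e φ₁} ∈ (I (X × Y)).dom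

/-- Minimal default independence. -/
def MDI (I : ∀ (X : Type) [Fintype X], InfProc X) : Prop :=
  ∀ (X Y : Type) [Fintype X] [Fintype Y], ∀ KB : Set (PM X), ∀ (S : Set X) (T : Set Y),
    liftKB Y KB ∈ (I (X × Y)).dom →
    Infers (I (X × Y)) (liftKB Y KB)
      {μ | μ.prob (S ×ˢ T) = μ.prob (S ×ˢ (Set.univ : Set Y)) * μ.prob ((Set.univ : Set X) ×ˢ T)}

/-- `KB` depends only on `S₁, …, S_k`. -/
def DependsOnly {X : Type} [Fintype X] {k : ℕ} (KB : Set (PM X)) (S : Fin k → Set X) : Prop :=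
  ∀ μ μ' : PM X, (∀ i, μ.prob (S i) = μ'.prob (S i)) → (μ ∈ KB ↔ μ' ∈ KB)

/-- An atom over `S₁, …, S_k`. -/
def Atom {X : Type} {k : ℕ} (S : Fin k → Set X) (c : Fin k → Bool) : Set X :=
  ⋂ i, (if c i then S i else (S i)ᶜ)

section KL

variable {X : Type} [Fintype X]

/-- Absolute continuity of pmfs. -/
def AbsCont (μ' μ : PM X) : Prop := ∀ x, μ.pm x = 0 → μ'.pm x = 0

/-- Relative entropy `D(μ'‖μ) ∈ [0,∞]` (it is `⊤` unless `μ' ≪ μ`). -/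
noncomputable def KL (μ' μ : PM X) : EReal := by
  classical
  exact if AbsCont μ' μ then
    ((∑ x, μ'.pm x * Real.log (μ'.pm x / μ.pm x) : ℝ) : EReal)
  else ⊤

/-- The relative-entropy projection `μ|θ`. -/
def klProj (μ : PM X) (θ : Set (PM X)) : Set (PM X) :=
  {μ' | μ' ∈ θ ∧ KL μ' μ ≠ ⊤ ∧ ∀ μ'' ∈ θ, KL μ' μ ≤ KL μ'' μ}

/-- `D|θ = ⋃_{μ ∈ D} μ|θ`. -/
def DProj (D : Set (PM X)) (θ : Set (PM X)) : Set (PM X) :=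
  ⋃ μ ∈ D, klProj μ θ

end KL

section Products

variable {n : ℕ} {X : Fin n → Type} [∀ i, Fintype (X i)]

/-- The `i`-th marginal of a measure on a finite product. -/
noncomputable def margPi (μ : PM (∀ i, X i)) (i : Fin n) : PM (X i) where
  pm a := μ.prob {x | x i = a}
  nonneg a := PM.prob_nonneg _ _
  total := by
    classical
    unfold PM.prob
    rw [Finset.sum_comm]
    have h : ∀ x : (∀ i, X i),
        (∑ a, ({y : ∀ j, X j | y i = a}).indicator μ.pm x) = μ.pm x := by
      intro x
      simp [Set.indicator_apply]
    simp only [h]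
    exact μ.total

/-- `μ` is a product measure on `X₁ × ⋯ × Xₙ`. -/
def IsProdPM (μ : PM (∀ i, X i)) : Prop :=
  ∃ μi : ∀ i, PM (X i), ∀ U : ∀ i, Set (X i),
    μ.prob {x | ∀ i, x i ∈ U i} = ∏ i, (μi i).prob (U i)

end Products

/-- The set `P_Π(X)` of product measures. -/
def PPi {n : ℕ} (X : Fin n → Type) [∀ i, Fintype (X i)] : Set (PM (∀ i, X i)) :=
  {μ | IsProdPM μ}

/-- `e` is a product embedding. -/
def IsProdEmb {n : ℕ} {X Y : Fin n → Type} (e : Emb (∀ i, X i) (∀ i, Y i)) : Prop :=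
  ∃ ei : ∀ i, Emb (X i) (Y i), ∀ S : Set (∀ i, X i),
    e.f S = ⋃ x ∈ S, {y | ∀ i, y i ∈ (ei i).f {x i}}



section Stmt4Aux

variable {X Y : Type} [Fintype X] [Fintype Y]

lemma PM.ext' {μ ν : PM X} (h : μ.pm = ν.pm) : μ = ν := by
  cases μ; cases ν; simpa using h

lemma prob_singleton (μ : PM X) (x : X) : μ.prob {x} = μ.pm x := by
  classical
  unfold PM.prob
  rw [Finset.sum_eq_single x]
  · simp
  · intro b _ hb; simp [Set.indicator_apply, hb]
  · simp

lemma prob_mono (μ : PM X) {A B : Set X} (h : A ⊆ B) : μ.prob A ≤ μ.prob B := by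
  classical
  apply Finset.sum_le_sum
  intro x _
  by_cases hx : x ∈ A
  · simp [Set.indicator_apply, hx, h hx]
  · simp only [Set.indicator_apply, hx, if_false]
    split
    · exact μ.nonneg x
    · exact le_rfl

lemma prob_le_one (μ : PM X) (S : Set X) : μ.prob S ≤ 1 := by
  have h := prob_mono μ (Set.subset_univ S)
  have : μ.prob Set.univ = 1 := by
    unfold PM.prob; simp [μ.total]
  linarith

lemma emb_mono (e : Emb X Y) {S T : Set X} (h : S ⊆ T) : e.f S ⊆ e.f T := by
  have : e.f T = e.f S ∪ e.f T := by
    rw [← e.map_union, Set.union_eq_self_of_subset_left h]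
  rw [this]; exact Set.subset_union_left

lemma emb_empty (e : Emb X Y) : e.f ∅ = ∅ := by
  have huniv : e.f Set.univ = Set.univ := by
    have := e.map_union Set.univ Set.univᶜ
    rw [Set.union_compl_self, e.map_compl] at this
    rw [this, Set.union_compl_self]
  have : e.f ∅ = (e.f Set.univ)ᶜ := by
    rw [← e.map_compl]; simp
  rw [this, huniv, Set.compl_univ]

noncomputable def dirac (x : X) : PM X := by
  classical
  exact
  { pm := fun x' => if x' = x then 1 else 0
    nonneg := by intro x'; split <;> norm_num
    total := by simp }

open Classical in
lemma dirac_prob (x : X) (S : Set X) :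
    (dirac x).prob S = if x ∈ S then 1 else 0 := by
  classical
  unfold PM.prob dirac
  rw [Finset.sum_eq_single x]
  · simp [Set.indicator_apply]
  · intro b _ hb; simp [Set.indicator_apply, hb]
  · simp

lemma corr_inj (e : Emb X Y) {μ μ' : PM X} {ν : PM Y}
    (h : Corr e μ ν) (h' : Corr e μ' ν) : μ = μ' := by
  apply PM.ext'
  funext x
  have := (h {x}).trans (h' {x}).symm
  rwa [prob_singleton, prob_singleton] at this

lemma exists_corr (e : Emb X Y) (he : e.Faithful) (μ : PM X) :
    ∃ ν, Corr e μ ν := by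
  classical
  have hne : ∀ x : X, (e.f {x}).Nonempty := by
    intro x
    rcases Set.eq_empty_or_nonempty (e.f {x}) with h | h
    · exfalso
      have : ({x} : Set X) ⊆ ∅ := (he {x} ∅).2 (by rw [h, emb_empty])
      simpa using this
    · exact h
  choose y hy using hne
  have hmem : ∀ (x : X) (S : Set X), y x ∈ e.f S ↔ x ∈ S := by
    intro x S
    constructor
    · intro hx
      by_contra hxS
      have : y x ∈ e.f Sᶜ := emb_mono e (by simpa using hxS) (hy x)
      rw [e.map_compl] at this
      exact this hx
    · intro hx
      exact emb_mono e (by simpa using hx) (hy x)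
  refine ⟨{ pm := fun b => ∑ x, if y x = b then μ.pm x else 0
            nonneg := ?_
            total := ?_ }, ?_⟩
  · intro b
    apply Finset.sum_nonneg
    intro x _
    split
    · exact μ.nonneg x
    · exact le_rfl
  · rw [Finset.sum_comm]
    have : ∀ x : X, (∑ b, if y x = b then μ.pm x else 0) = μ.pm x := by
      intro x; simp
    simp only [this]; exact μ.total
  · intro S
    unfold PM.prob
    have : ∀ b : Y, (e.f S).indicator (fun b => ∑ x, if y x = b then μ.pm x else 0) b
        = ∑ x, if y x = b ∧ b ∈ e.f S then μ.pm x else 0 := by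
      intro b
      by_cases hb : b ∈ e.f S
      · simp [Set.indicator_apply, hb]
      · simp [Set.indicator_apply, hb]
    simp only [this]
    rw [Finset.sum_comm]
    apply Finset.sum_congr rfl
    intro x _
    rw [Finset.sum_eq_single (y x)]
    · by_cases hx : x ∈ S
      · simp [Set.indicator_apply, hx, (hmem x S).2 hx]
      · have : y x ∉ e.f S := fun h => hx ((hmem x S).1 h)
        simp [Set.indicator_apply, hx, this]
    · intro b _ hb; simp [Ne.symm hb]
    · simp

end Stmt4Aux

/-- an embedding is faithful iff it preserves entailment of
constraints in both directions. -/
theorem stmt4 {X Y : Type} [Fintype X] [Fintype Y] (e : Emb X Y) :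
    e.Faithful ↔ ∀ KB θ : Set (PM X), (KB ⊆ θ ↔ fstar e KB ⊆ fstar e θ) := by
  constructor
  · intro he KB θ
    constructor
    · rintro h ν ⟨μ, hμ, hc⟩
      exact ⟨μ, h hμ, hc⟩
    · intro h μ hμ
      obtain ⟨ν, hν⟩ := exists_corr e he μ
      obtain ⟨μ', hμ', hc'⟩ := h ⟨μ, hμ, hν⟩
      rwa [corr_inj e hν hc']
  · intro h S T
    constructor
    · exact emb_mono e
    · intro hf x hx
      have : ¬ fstar e {dirac x} ⊆ fstar e ∅ := by
        intro hc
        exact (h {dirac x} ∅).2 hc (Set.mem_singleton _)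
      obtain ⟨ν, ⟨μ, hμ, hc⟩, -⟩ := Set.not_subset.1 this
      rw [Set.mem_singleton_iff] at hμ; subst hμ
      have h1 : ν.prob (e.f S) = 1 := by
        rw [← hc S, dirac_prob, if_pos hx]
      have h2 : ν.prob (e.f T) = (dirac x).prob T := (hc T).symm
      have := prob_mono ν hf
      rw [h1, h2, dirac_prob] at this
      by_contra hxT
      rw [if_neg hxT] at this
      linarith
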